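/- If λ is a Perron number and k is a positive integer, then λ^k is also a Perron number. -/

import Mathlib

open Polynomial IntermediateField

/-- A Perron number: a real algebraic integer `λ > 1` such that every complex root
`α ≠ λ` of its minimal polynomial over `ℚ` satisfies `|α| < λ`. -/
def IsPerronNumber (lam : ℝ) : Prop :=
  IsIntegral ℤ lam ∧ 1 < lam ∧
    ∀ α : ℂ, Polynomial.aeval α (minpoly ℚ lam) = 0 → α ≠ (lam : ℂ) →
      ‖α‖ < lam

theorem stmt_18 (lam : ℝ) (h : IsPerronNumber lam) (k : ℕ) (hk : 0 < k) :
    IsPerronNumber (lam ^ k) := by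
  obtain ⟨hint, hgt, hroots⟩ := h
  refine ⟨hint.pow k, one_lt_pow₀ hgt hk.ne', ?_⟩
  intro β hβ hβne
  set x : ℂ := (lam : ℂ) with hx
  have hxint : IsIntegral ℚ x := by
    have h1 : IsIntegral ℚ lam := hint.tower_top
    exact h1.map (IsScalarTower.toAlgHom ℚ ℝ ℂ)
  -- minpoly over ℝ vs ℂ
  have hmp : minpoly ℚ (x ^ k) = minpoly ℚ (lam ^ k) := by
    have : algebraMap ℝ ℂ (lam ^ k) = x ^ k := by rw [hx]; push_cast; rfl
    rw [← this, minpoly.algebraMap_eq (algebraMap ℝ ℂ).injective]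
  have hmpx : minpoly ℚ x = minpoly ℚ lam := by
    rw [hx, ← Complex.coe_algebraMap, minpoly.algebraMap_eq (algebraMap ℝ ℂ).injective]
  haveI : FiniteDimensional ℚ ℚ⟮x⟯ := IntermediateField.adjoin.finiteDimensional hxint
  haveI : Algebra.IsAlgebraic ℚ ℚ⟮x⟯ := Algebra.IsAlgebraic.of_finite ℚ _
  set g : ℚ⟮x⟯ := IntermediateField.AdjoinSimple.gen ℚ x with hg
  have hgmap : algebraMap ℚ⟮x⟯ ℂ g = x := rfl
  set y : ℚ⟮x⟯ := g ^ k with hy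
  have hymap : algebraMap ℚ⟮x⟯ ℂ y = x ^ k := by rw [hy, map_pow, hgmap]
  have hyint : IsIntegral ℚ y := IsIntegral.of_finite ℚ y
  have hmpy : minpoly ℚ y = minpoly ℚ (lam ^ k) := by
    rw [← hmp, ← hymap, minpoly.algebraMap_eq (algebraMap ℚ⟮x⟯ ℂ).injective]
  have hβ' : β ∈ (minpoly ℚ y).rootSet ℂ := by
    rw [Polynomial.mem_rootSet]
    exact ⟨minpoly.ne_zero hyint, by rw [hmpy]; exact hβ⟩
  rw [← Algebra.IsAlgebraic.range_eval_eq_rootSet_minpoly ℂ y] at hβ'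
  obtain ⟨ψ, hψ⟩ := hβ'
  have hψ' : ψ y = β := hψ
  set α : ℂ := ψ g with hα
  have hαβ : α ^ k = β := by rw [hα, ← map_pow, ← hy, hψ']
  have hαroot : Polynomial.aeval α (minpoly ℚ lam) = 0 := by
    rw [← hmpx, hα]
    have := minpoly.aeval ℚ g
    calc Polynomial.aeval (ψ g) (minpoly ℚ x)
        = ψ (Polynomial.aeval g (minpoly ℚ x)) := Polynomial.aeval_algHom_apply ψ g _
      _ = 0 := by
          rw [← minpoly.algebraMap_eq (algebraMap ℚ⟮x⟯ ℂ).injective g, hgmap] at this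
          rw [this, map_zero]
  by_cases hcase : α = x
  · exfalso
    apply hβne
    rw [← hαβ, hcase, hx]
    push_cast
    ring
  · have hlt : ‖α‖ < lam := hroots α hαroot hcase
    calc ‖β‖ = ‖α‖ ^ k := by rw [← hαβ, norm_pow]
      _ < lam ^ k := pow_lt_pow_left₀ hlt (norm_nonneg α) hk.ne'
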